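/- Let E/E₀ be a quadratic extension, U a 2n-dimensional E-vector space with nondegenerate Hermitian form h, τ₁ : ⋀ⁿ_E U → (⋀ⁿ_E U)^* the E-linear isomorphism induced by the wedge pairing ⋀ⁿ_E U × ⋀ⁿ_E U → ⋀²ⁿ_E U ≅ E, and τ₂ : ⋀ⁿ_E U → (⋀ⁿ_E U)^* the conjugate-linear isomorphism induced by ⋀ⁿh. Then the composite ⋆ = τ₁⁻¹ ∘ τ₂ satisfies ⋆ ∘ ⋆ = (−1)ⁿ det(h) · id (as E₀-linear maps, after fixing a trivialization ⋀²ⁿ_E U ≅ E via a basis with det(h) computed in that basis). -/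

import Mathlib

/-- The decomposable element `v₁ ∧ ⋯ ∧ v_n` of the `n`-th exterior power
`⋀[R]^n M ⊆ ExteriorAlgebra R M`. -/
noncomputable def wedgeProd (R : Type*) [CommRing R] {M : Type*} [AddCommGroup M]
    [Module R M] (n : ℕ) (v : Fin n → M) : ⋀[R]^n M :=
  ⟨ExteriorAlgebra.ιMulti R n v, ExteriorAlgebra.ιMulti_range R n ⟨v, rfl⟩⟩


open ExteriorAlgebra

section auxExt
variable {R M : Type*} [CommRing R] [AddCommGroup M] [Module R M]

private lemma fin_comp_append {α β : Type*} {m n : ℕ} (g : α → β) (u : Fin m → α) (v : Fin n → α) :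
    g ∘ Fin.append u v = Fin.append (g ∘ u) (g ∘ v) := by
  funext i
  induction i using Fin.addCases with
  | left i => simp [Fin.append_left]
  | right i => simp [Fin.append_right]

private lemma listprod_mul_iota (l : List M) (a : M) :
    (l.map (ι R)).prod * ι R a = ((-1 : R) ^ l.length) • (ι R a * (l.map (ι R)).prod) := by
  induction l with
  | nil => simp
  | cons b l ih =>
    have hba : ι R b * ι R a = -(ι R a * ι R b) :=
      eq_neg_of_add_eq_zero_right (ι_add_mul_swap a b)
    simp only [List.map_cons, List.prod_cons, List.length_cons]
    rw [mul_assoc, ih, mul_smul_comm, ← mul_assoc, hba, neg_mul, smul_neg, mul_assoc,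
      pow_succ, mul_neg_one, neg_smul]

private lemma listprod_comm (l₁ l₂ : List M) :
    (l₁.map (ι R)).prod * (l₂.map (ι R)).prod =
      ((-1 : R) ^ (l₁.length * l₂.length)) • ((l₂.map (ι R)).prod * (l₁.map (ι R)).prod) := by
  induction l₂ with
  | nil => simp
  | cons a l₂ ih =>
    simp only [List.map_cons, List.prod_cons, List.length_cons]
    rw [← mul_assoc, listprod_mul_iota, smul_mul_assoc, mul_assoc, ih, mul_smul_comm,
      smul_smul, ← mul_assoc, ← pow_add]
    congr 2
    ring

private lemma iotaMulti_mul {m n : ℕ} (u : Fin m → M) (v : Fin n → M) :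
    (ιMulti R m u : ExteriorAlgebra R M) * ιMulti R n v = ιMulti R (m + n) (Fin.append u v) := by
  rw [ιMulti_apply, ιMulti_apply, ιMulti_apply]
  have : (List.ofFn fun i => ι R (Fin.append u v i)) =
      (List.ofFn fun i => ι R (u i)) ++ (List.ofFn fun i => ι R (v i)) := by
    rw [← List.ofFn_fin_append]
    congr 1
    funext i
    induction i using Fin.addCases with
    | left i => simp [Fin.append_left]
    | right i => simp [Fin.append_right]
  rw [this, List.prod_append]

private lemma iotaMulti_cast {m k : ℕ} (h : m = k) (w : Fin k → M) :
    (ιMulti R m (w ∘ Fin.cast h) : ExteriorAlgebra R M) = ιMulti R k w := by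
  subst h
  rfl

private lemma iotaMulti_mul_eq_zero {n : ℕ} (u v : Fin n → M) (i j : Fin n)
    (hij : u i = v j) :
    (ιMulti R n u : ExteriorAlgebra R M) * ιMulti R n v = 0 := by
  rw [iotaMulti_mul]
  refine AlternatingMap.map_eq_zero_of_eq _ _
    (i := Fin.castAdd n i) (j := Fin.natAdd n j) ?_ ?_
  · rw [Fin.append_left, Fin.append_right, hij]
  · intro hc
    have hval := congrArg Fin.val hc
    simp only [Fin.coe_castAdd, Fin.coe_natAdd] at hval
    have := i.isLt
    omega

private lemma iotaMulti_comm {n : ℕ} (u v : Fin n → M) :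
    (ιMulti R n u : ExteriorAlgebra R M) * ιMulti R n v =
      ((-1 : R) ^ n) • ((ιMulti R n v : ExteriorAlgebra R M) * ιMulti R n u) := by
  have h1 : ∀ w : Fin n → M, (ιMulti R n w : ExteriorAlgebra R M) =
      ((List.ofFn w).map (ι R)).prod := by
    intro w
    rw [ιMulti_apply, List.map_ofFn]
    rfl
  rw [h1 u, h1 v, listprod_comm]
  have : ((-1 : R) ^ ((List.ofFn u).length * (List.ofFn v).length)) = (-1 : R) ^ n := by
    simp only [List.length_ofFn]
    rcases Nat.even_or_odd n with he | ho
    · rw [he.neg_one_pow, (he.mul_right n).neg_one_pow]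
    · rw [ho.neg_one_pow, (ho.mul ho).neg_one_pow]
  rw [this]

end auxExt

private lemma herm_exists_nonzero_diag {E : Type*} [Field E] (σ : E →+* E)
    (hσinv : ∀ x : E, σ (σ x) = x) (a0 : E) (ha0 : σ a0 ≠ a0)
    {U : Type*} [AddCommGroup U] [Module E U]
    (h : U →ₗ[E] (U →ₛₗ[σ] E)) (hherm : ∀ u v : U, h u v = σ (h v u))
    (hne : h ≠ 0) : ∃ u : U, h u u ≠ 0 := by
  by_contra hd
  push_neg at hd
  apply hne
  ext u v
  -- expand h (u + v) (u + v) = 0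
  have e1 : h u v + h v u = 0 := by
    have := hd (u + v)
    simp only [map_add, LinearMap.add_apply] at this
    rw [hd u, hd v] at this
    linear_combination this
  have e2 : σ a0 * h u v + a0 * h v u = 0 := by
    have := hd (u + a0 • v)
    simp only [map_add, map_smul, LinearMap.add_apply, LinearMap.smul_apply,
      LinearMap.map_smulₛₗ, smul_eq_mul] at this
    rw [hd u, hd v] at this
    ring_nf at this ⊢
    linear_combination this
  have e3 : (σ a0 - a0) * h u v = 0 := by
    have : h v u = -h u v := by linear_combination e1
    rw [this] at e2
    ring_nf at e2 ⊢
    linear_combination e2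
  have := mul_eq_zero.mp e3
  rcases this with h1 | h1
  · exact absurd (sub_eq_zero.mp h1) ha0
  · simpa using h1

private def hermRestrict {E : Type*} [Field E] (σ : E →+* E)
    {U : Type*} [AddCommGroup U] [Module E U]
    (h : U →ₗ[E] (U →ₛₗ[σ] E)) (W : Submodule E U) : W →ₗ[E] (W →ₛₗ[σ] E) :=
  LinearMap.mk₂'ₛₗ (RingHom.id E) σ (fun w z => h w z)
    (fun w₁ w₂ z => show h ↑(w₁ + w₂) ↑z = h ↑w₁ ↑z + h ↑w₂ ↑z by
      rw [Submodule.coe_add, map_add, LinearMap.add_apply])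
    (fun c w z => show h ↑(c • w) ↑z = (RingHom.id E) c • h ↑w ↑z by
      rw [Submodule.coe_smul, map_smul, LinearMap.smul_apply, RingHom.id_apply])
    (fun w z₁ z₂ => show h ↑w ↑(z₁ + z₂) = h ↑w ↑z₁ + h ↑w ↑z₂ by
      rw [Submodule.coe_add, map_add])
    (fun c w z => show h ↑w ↑(c • z) = σ c • h ↑w ↑z by
      rw [Submodule.coe_smul, LinearMap.map_smulₛₗ])

private lemma hermRestrict_apply {E : Type*} [Field E] (σ : E →+* E)
    {U : Type*} [AddCommGroup U] [Module E U]
    (h : U →ₗ[E] (U →ₛₗ[σ] E)) (W : Submodule E U) (w z : W) :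
    hermRestrict σ h W w z = h w z := rfl

private lemma herm_exists_orth_basis {E : Type*} [Field E] (σ : E →+* E)
    (hσinv : ∀ x : E, σ (σ x) = x) (a0 : E) (ha0 : σ a0 ≠ a0) :
    ∀ (m : ℕ) (U : Type*) [AddCommGroup U] [Module E U] [FiniteDimensional E U],
      Module.finrank E U = m →
      ∀ (h : U →ₗ[E] (U →ₛₗ[σ] E)), (∀ u v : U, h u v = σ (h v u)) →
      ∃ f : Module.Basis (Fin m) E U, ∀ i j, i ≠ j → h (f i) (f j) = 0 := by
  have hσinj : Function.Injective σ := σ.injective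
  intro m
  induction m with
  | zero =>
    intro U _ _ _ hU h _
    haveI : Subsingleton U := Module.finrank_zero_iff.mp hU
    exact ⟨Module.Basis.empty U, fun i _ _ => i.elim0⟩
  | succ m ih =>
    intro U _ _ _ hU h hherm
    by_cases hz : h = 0
    · exact ⟨Module.finBasisOfFinrankEq E U hU, fun i j _ => by simp [hz]⟩
    · obtain ⟨u, hu⟩ := herm_exists_nonzero_diag σ hσinv a0 ha0 h hherm hz
      -- the linearized functional
      set φ : U →ₗ[E] E :=
        { toFun := fun v => σ (h u v)
          map_add' := by intro x y; simp
          map_smul' := by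
            intro c v
            simp only [LinearMap.map_smulₛₗ, smul_eq_mul, map_mul, hσinv, RingHom.id_apply] } with hφ
      have hφu : φ u ≠ 0 := fun hc => hu (by simpa [hφ, map_eq_zero_iff σ hσinj] using hc)
      set W := LinearMap.ker φ with hWdef
      have hmemW : ∀ v : U, v ∈ W ↔ h u v = 0 := by
        intro v
        simp [hWdef, hφ, LinearMap.mem_ker, map_eq_zero_iff σ hσinj]
      have huW : u ∉ W := fun hc => hu ((hmemW u).mp hc)
      -- finrank W = m
      have hrange : LinearMap.range φ = ⊤ := by
        rcases Ideal.eq_bot_or_top (LinearMap.range φ) with hb | ht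
        · exfalso; exact hφu (by
            have : φ u ∈ LinearMap.range φ := LinearMap.mem_range_self φ u
            rwa [hb, Submodule.mem_bot] at this)
        · exact ht
      have hWrank : Module.finrank E W = m := by
        have := LinearMap.finrank_range_add_finrank_ker φ
        rw [hrange, finrank_top, Module.finrank_self, hU] at this
        rw [hWdef]
        omega
      -- restricted form
      obtain ⟨b, hb⟩ := ih W hWrank (hermRestrict σ h W) (fun w z => by
        rw [hermRestrict_apply, hermRestrict_apply, hherm])
      -- assemble
      set g : Fin (m + 1) → U := Fin.cons u (fun i => (b i : U)) with hg
      have hbli : LinearIndependent E (fun i => (b i : U)) :=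
        b.linearIndependent.map' W.subtype W.ker_subtype
      have hspanb : Submodule.span E (Set.range fun i => (b i : U)) = W := by
        have : (Set.range fun i => (b i : U)) = W.subtype '' (Set.range b) := by
          rw [← Set.range_comp]; rfl
        rw [this, ← Submodule.map_span, b.span_eq, Submodule.map_top, Submodule.range_subtype]
      have hli : LinearIndependent E g := by
        rw [hg]
        exact hbli.fin_cons (by rw [hspanb]; exact huW)
      have hsp : ⊤ ≤ Submodule.span E (Set.range g) := by
        intro v _
        have hdecomp : v = σ (h u v / h u u) • u + (v - σ (h u v / h u u) • u) := by abel
        have hvW : v - σ (h u v / h u u) • u ∈ W := by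
          rw [hmemW]
          simp only [map_sub, LinearMap.map_smulₛₗ, smul_eq_mul, hσinv]
          field_simp
          ring
        have h1 : u ∈ Set.range g := ⟨0, by simp only [hg, Fin.cons_zero]⟩
        have h2 : v - σ (h u v / h u u) • u ∈ Submodule.span E (Set.range g) := by
          have : W ≤ Submodule.span E (Set.range g) := by
            rw [← hspanb]
            apply Submodule.span_mono
            intro x hx
            obtain ⟨i, rfl⟩ := hx
            exact ⟨i.succ, by simp only [hg, Fin.cons_succ]⟩
          exact this hvW
        rw [hdecomp]
        exact Submodule.add_mem _ (Submodule.smul_mem _ _ (Submodule.subset_span h1)) h2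
      refine ⟨Module.Basis.mk hli hsp, ?_⟩
      intro i j hij
      rw [Module.Basis.mk_apply, Module.Basis.mk_apply]
      induction i using Fin.cases with
      | zero =>
        induction j using Fin.cases with
        | zero => exact absurd rfl hij
        | succ j =>
          simp only [hg, Fin.cons_zero, Fin.cons_succ]
          exact (hmemW _).mp (b j).2
      | succ i =>
        induction j using Fin.cases with
        | zero =>
          have : h u (b i : U) = 0 := (hmemW _).mp (b i).2
          simp only [hg, Fin.cons_succ, Fin.cons_zero]
          rw [hherm, this, map_zero]
        | succ j =>
          have hij' : i ≠ j := fun hc => hij (by rw [hc])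
          have := hb i j hij'
          rw [hermRestrict_apply] at this
          simp only [hg, Fin.cons_succ]
          exact this

section main
set_option maxHeartbeats 1000000

/-- Let `E/E₀` be a quadratic extension with conjugation `σ`, `U` a
`2n`-dimensional `E`-vector space with nondegenerate Hermitian form `h`,
`τ₁` the `E`-linear isomorphism `⋀ⁿ_E U → (⋀ⁿ_E U)^*` induced by the wedge
pairing (trivialized by a basis `e` of `U`), and `τ₂` the conjugate-linear
map induced by `⋀ⁿh`. Then `⋆ = τ₁⁻¹ ∘ τ₂` satisfies
`⋆ ∘ ⋆ = (−1)ⁿ det(h) · id`, where `det(h)` is the Gram determinant of `h`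
in the basis `e`. -/
theorem star_squared_eq_discriminant
    (E₀ E : Type*) [Field E₀] [Field E] [CharZero E₀]
    [Algebra E₀ E] (hquad : Module.finrank E₀ E = 2)
    (σ : E →+* E)
    (hσfix : ∀ a : E₀, σ (algebraMap E₀ E a) = algebraMap E₀ E a)
    (hσinv : ∀ x : E, σ (σ x) = x)
    (hσne : σ ≠ RingHom.id E)
    (n : ℕ) (hn : 0 < n)
    (U : Type*) [AddCommGroup U] [Module E U]
    [FiniteDimensional E U] (hU : Module.finrank E U = 2 * n)
    (e : Module.Basis (Fin (2 * n)) E U)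
    (h : U →ₗ[E] (U →ₛₗ[σ] E))
    (hherm : ∀ u v : U, h u v = σ (h v u))
    (hnd : ∀ u : U, (∀ v : U, h u v = 0) → u = 0)
    -- the sesquilinear extension `⋀ⁿh` of `h` to the exterior power
    (Hn : (⋀[E]^n U) →ₗ[E] ((⋀[E]^n U) →ₛₗ[σ] E))
    (hHn : ∀ v u : Fin n → U,
      Hn (wedgeProd E n v) (wedgeProd E n u) =
        Matrix.det (Matrix.of fun i j => h (v i) (u j)))
    -- `τ₁`, the isomorphism to the dual given by the wedge pairing
    (T1 : (⋀[E]^n U) →ₗ[E] Module.Dual E (⋀[E]^n U))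
    (hT1 : ∀ x y : ⋀[E]^n U,
      (x : ExteriorAlgebra E U) * (y : ExteriorAlgebra E U) =
        T1 x y • ((wedgeProd E (2 * n) (fun i => e i) : ⋀[E]^(2 * n) U) :
          ExteriorAlgebra E U))
    (hT1bij : Function.Bijective T1)
    -- `⋆ = τ₁⁻¹ ∘ τ₂`, i.e. `τ₁(⋆ x) = ⋀ⁿh(·, x)`
    (star : (⋀[E]^n U) → (⋀[E]^n U))
    (hstar : ∀ x y : ⋀[E]^n U, T1 (star x) y = Hn y x) :
    ∀ x : ⋀[E]^n U,
      star (star x) =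
        ((-1 : E) ^ n * Matrix.det (Matrix.of fun i j => h (e i) (e j))) • x := by
  have hσinj : Function.Injective σ := σ.injective
  obtain ⟨a0, ha0⟩ : ∃ x : E, σ x ≠ x := by
    by_contra hc
    push_neg at hc
    exact hσne (RingHom.ext hc)
  -- orthogonal basis
  obtain ⟨f, hf⟩ := herm_exists_orth_basis σ hσinv a0 ha0 (2 * n) U hU h hherm
  set a : Fin (2 * n) → E := fun i => h (f i) (f i) with ha
  have hσa : ∀ i, σ (a i) = a i := fun i => (hherm (f i) (f i)).symm
  set d : E := e.det ⇑f with hd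
  have hd0 : d ≠ 0 := (e.isUnit_det f).ne_zero
  have hσd0 : σ d ≠ 0 := fun hc => hd0 (by simpa [map_eq_zero_iff σ hσinj] using hc)
  set detE : E := Matrix.det (Matrix.of fun i j => h (e i) (e j)) with hdetE
  have h2n : 2 * n = n + n := two_mul n
  -- the coordinate functional on the top exterior power
  set ℓ : ExteriorAlgebra E U →ₗ[E] E :=
    ExteriorAlgebra.liftAlternating
      (Function.update (fun i => (0 : U [⋀^Fin i]→ₗ[E] E)) (2 * n) e.det) with hℓdef
  have hℓ : ∀ v : Fin (2 * n) → U,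
      ℓ (ExteriorAlgebra.ιMulti E (2 * n) v) = e.det v := by
    intro v
    rw [hℓdef, ExteriorAlgebra.liftAlternating_apply_ιMulti, Function.update_self]
  have hℓtop :
      ℓ ((wedgeProd E (2 * n) (fun i => e i) : ⋀[E]^(2 * n) U) : ExteriorAlgebra E U) = 1 := by
    have h1 : ((wedgeProd E (2 * n) (fun i => e i) : ⋀[E]^(2 * n) U) : ExteriorAlgebra E U) =
        ExteriorAlgebra.ιMulti E (2 * n) (fun i => e i) := rfl
    rw [h1, hℓ]
    exact e.det_self
  have hT1val : ∀ x y : ⋀[E]^n U, ℓ ((x : ExteriorAlgebra E U) * y) = T1 x y := by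
    intro x y
    rw [hT1 x y, map_smul, hℓtop, smul_eq_mul, mul_one]
  -- star is sigma-semilinear
  have hstar_smul : ∀ (r : E) (x : ⋀[E]^n U), star (r • x) = σ r • star x := by
    intro r x
    apply hT1bij.1
    apply LinearMap.ext
    intro y
    rw [hstar, map_smulₛₗ, map_smul, LinearMap.smul_apply, hstar]
  have hstar_add : ∀ x y : ⋀[E]^n U, star (x + y) = star x + star y := by
    intro x y
    apply hT1bij.1
    apply LinearMap.ext
    intro z
    rw [hstar, map_add, map_add, LinearMap.add_apply, hstar, hstar]
  have hstar_zero : star 0 = 0 := by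
    have := hstar_smul 0 0
    simpa using this
  -- the family of basis wedges
  set bw : (Fin n → Fin (2 * n)) → ⋀[E]^n U :=
    fun k => wedgeProd E n (fun i => f (k i)) with hbw
  have hbwcoe : ∀ k, ((bw k : ⋀[E]^n U) : ExteriorAlgebra E U) =
      ExteriorAlgebra.ιMulti E n (fun i => f (k i)) := fun k => rfl
  -- spanning
  have hspan : Submodule.span E (Set.range bw) = ⊤ := by
    rw [Submodule.eq_top_iff']
    intro x
    have hx1 : (x : ExteriorAlgebra E U) ∈
        Submodule.map (⋀[E]^n U).subtype (Submodule.span E (Set.range bw)) := by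
      have hle : (⋀[E]^n U) ≤
          Submodule.map (⋀[E]^n U).subtype (Submodule.span E (Set.range bw)) := by
        rw [Submodule.map_span]
        refine le_trans (le_of_eq (ExteriorAlgebra.ιMulti_span_fixedDegree E n).symm) ?_
        apply Submodule.span_le.mpr
        rintro _ ⟨v, rfl⟩
        have himg : ∀ k : Fin n → Fin (2 * n),
            ExteriorAlgebra.ιMulti E n (fun i => f (k i)) ∈
              (⋀[E]^n U).subtype '' Set.range bw :=
          fun k => ⟨bw k, ⟨k, rfl⟩, rfl⟩
        have expand : ExteriorAlgebra.ιMulti E n v =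
            ∑ k : Fin n → Fin (2 * n),
              (∏ i, f.repr (v i) (k i)) • ExteriorAlgebra.ιMulti E n (fun i => f (k i)) := by
          conv_lhs => rw [show v = fun i => ∑ j, f.repr (v i) j • f j by
            funext i; rw [f.sum_repr]]
          rw [show (ExteriorAlgebra.ιMulti E n) (fun i => ∑ j, f.repr (v i) j • f j) =
            (ExteriorAlgebra.ιMulti E n (M := U)).toMultilinearMap
              (fun i => ∑ j, f.repr (v i) j • f j) from rfl]
          rw [MultilinearMap.map_sum]
          refine Finset.sum_congr rfl fun k _ => ?_
          rw [MultilinearMap.map_smul_univ]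
          rfl
        rw [expand]
        exact Submodule.sum_mem _ fun k _ =>
          Submodule.smul_mem _ _ (Submodule.subset_span (himg k))
      exact hle x.2
    obtain ⟨y, hy, hyx⟩ := hx1
    have hxy : y = x := Subtype.ext hyx
    rwa [hxy] at hy
  -- non-injective tuples give zero wedges
  have hbw0 : ∀ k : Fin n → Fin (2 * n), ¬ Function.Injective k → bw k = 0 := by
    intro k hk
    apply Subtype.ext
    rw [hbwcoe]
    show ExteriorAlgebra.ιMulti E n (fun i => f (k i)) = ((0 : ⋀[E]^n U) : ExteriorAlgebra E U)
    rw [AlternatingMap.map_eq_zero_of_not_injective _ _ (fun hinj => hk ?_)]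
    · rfl
    · intro i j hij
      exact hinj (show f (k i) = f (k j) from congrArg f hij)
  -- Gram determinant of f is the product of the diagonal entries
  have hGramf : Matrix.det (Matrix.of fun i j => h (f i) (f j)) = ∏ j, a j := by
    have hdiag : (Matrix.of fun i j => h (f i) (f j)) = Matrix.diagonal a := by
      ext i j
      by_cases hij : i = j
      · subst hij; simp [ha]
      · simp only [Matrix.of_apply, Matrix.diagonal_apply_ne _ hij]
        exact hf i j hij
    rw [hdiag, Matrix.det_diagonal]
  -- change of basis for the Gram determinant
  have hGramE : Matrix.det (Matrix.of fun i j => h (f i) (f j)) = d * σ d * detE := by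
    have hM : (Matrix.of fun i j => h (f i) (f j)) =
        (e.toMatrix ⇑f).transpose * (Matrix.of fun i j => h (e i) (e j)) * ((e.toMatrix ⇑f).map σ) := by
      ext i j
      show h (f i) (f j) = _
      conv_lhs => rw [show f i = ∑ p, e.repr (f i) p • e p from (e.sum_repr (f i)).symm,
        show f j = ∑ q, e.repr (f j) q • e q from (e.sum_repr (f j)).symm]
      simp only [map_sum, LinearMap.sum_apply, map_smul, LinearMap.smul_apply,
        LinearMap.map_smulₛₗ, smul_eq_mul, Finset.mul_sum, Finset.sum_mul,
        Matrix.mul_apply, Matrix.transpose_apply, Matrix.map_apply,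
        Module.Basis.toMatrix_apply, Matrix.of_apply]
      refine Finset.sum_congr rfl fun q _ => ?_
      refine Finset.sum_congr rfl fun p _ => ?_
      ring
    have hmapdet : ((e.toMatrix ⇑f).map σ).det = σ d := by
      rw [← RingHom.mapMatrix_apply, ← RingHom.map_det, ← Module.Basis.det_apply, ← hd]
    rw [hM, Matrix.det_mul, Matrix.det_mul, Matrix.det_transpose, hmapdet,
      ← Module.Basis.det_apply, ← hd, ← hdetE]
    ring
  -- the T1-pairing of complementary wedges is ± d
  have hbijapp : ∀ g cc : Fin n → Fin (2 * n), Function.Injective g → Function.Injective cc →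
      (∀ i j, cc i ≠ g j) →
      Function.Bijective ((Fin.append cc g) ∘ Fin.cast h2n) := by
    intro g cc hginj hcinj hdisj
    apply Finite.injective_iff_bijective.mp
    apply Function.Injective.comp ?_ (Fin.cast_injective h2n)
    intro p q hpq
    induction p using Fin.addCases with
    | left p =>
      induction q using Fin.addCases with
      | left q =>
        rw [Fin.append_left, Fin.append_left] at hpq
        rw [hcinj hpq]
      | right q =>
        rw [Fin.append_left, Fin.append_right] at hpq
        exact absurd hpq (hdisj p q)
    | right p =>
      induction q using Fin.addCases with
      | left q =>
        rw [Fin.append_right, Fin.append_left] at hpq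
        exact absurd hpq.symm (hdisj q p)
      | right q =>
        rw [Fin.append_right, Fin.append_right] at hpq
        rw [hginj hpq]
  have ht : ∀ g cc : Fin n → Fin (2 * n), Function.Injective g → Function.Injective cc →
      (∀ i j, cc i ≠ g j) →
      T1 (bw cc) (bw g) = d ∨ T1 (bw cc) (bw g) = -d := by
    intro g cc hginj hcinj hdisj
    set u : Fin (2 * n) → Fin (2 * n) := (Fin.append cc g) ∘ Fin.cast h2n with hu
    have hubij : Function.Bijective u := hbijapp g cc hginj hcinj hdisj
    have hprod : ((bw cc : ⋀[E]^n U) : ExteriorAlgebra E U) * ((bw g : ⋀[E]^n U) :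
        ExteriorAlgebra E U) = ExteriorAlgebra.ιMulti E (2 * n) (⇑f ∘ u) := by
      rw [hbwcoe, hbwcoe, iotaMulti_mul]
      have hfu : ⇑f ∘ u =
          (Fin.append (fun i => f (cc i)) (fun i => f (g i))) ∘ Fin.cast h2n := by
        rw [hu, ← Function.comp_assoc, fin_comp_append]
        rfl
      rw [hfu, iotaMulti_cast]
    have hperm : ExteriorAlgebra.ιMulti E (2 * n) (⇑f ∘ u) =
        Equiv.Perm.sign (Equiv.ofBijective u hubij) • ExteriorAlgebra.ιMulti E (2 * n) ⇑f := by
      exact (ExteriorAlgebra.ιMulti E (2 * n) (M := U)).map_perm ⇑f (Equiv.ofBijective u hubij)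
    have hval := hT1val (bw cc) (bw g)
    rw [hprod, hperm] at hval
    rcases Int.units_eq_one_or (Equiv.Perm.sign (Equiv.ofBijective u hubij)) with hs | hs
    · left
      rw [hs, one_smul] at hval
      rw [← hval, hℓ, ← hd]
    · right
      rw [hs] at hval
      rw [Units.smul_def, Units.val_neg, Units.val_one, neg_one_zsmul, map_neg] at hval
      rw [← hval, hℓ, ← hd]
  -- graded commutativity relation
  have hflip : ∀ g cc : Fin n → Fin (2 * n),
      T1 (bw cc) (bw g) = (-1 : E) ^ n * T1 (bw g) (bw cc) := by
    intro g cc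
    have h1 := hT1val (bw cc) (bw g)
    have h2 := hT1val (bw g) (bw cc)
    rw [← h1, ← h2, hbwcoe cc, hbwcoe g, iotaMulti_comm, map_smul, smul_eq_mul]
  -- the key formula for star on basis wedges
  have key : ∀ g cc : Fin n → Fin (2 * n), Function.Injective g → Function.Injective cc →
      (∀ i j, cc i ≠ g j) →
      star (bw g) = ((∏ i, a (g i)) / T1 (bw cc) (bw g)) • bw cc := by
    intro g cc hginj hcinj hdisj
    have htne : T1 (bw cc) (bw g) ≠ 0 := by
      rcases ht g cc hginj hcinj hdisj with h' | h' <;> simp [h', hd0]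
    apply hT1bij.1
    apply LinearMap.ext_on hspan
    rintro _ ⟨k, rfl⟩
    rw [hstar, map_smul, LinearMap.smul_apply, smul_eq_mul]
    by_cases hk : Function.Injective k
    · by_cases hrange : ∀ i, ∃ j, k i = g j
      · -- k is a permutation of g
        choose π0 hπ0 using hrange
        have hπ0inj : Function.Injective π0 := by
          intro i j hij
          apply hk
          rw [hπ0 i, hπ0 j, hij]
        have hgk : ∀ i, g (π0 i) = k i := fun i => (hπ0 i).symm
        obtain ⟨ε, hε1, hεbw⟩ : ∃ ε : E, (ε = 1 ∨ ε = -1) ∧ bw k = ε • bw g := by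
          set π : Equiv.Perm (Fin n) :=
            Equiv.ofBijective π0 (Finite.injective_iff_bijective.mp hπ0inj) with hπ
          have htuple : (fun i => f (k i)) = (fun i => f (g i)) ∘ ⇑π := by
            funext i
            show f (k i) = f (g (π0 i))
            rw [hgk i]
          have hperm2 : ExteriorAlgebra.ιMulti E n (fun i => f (k i)) =
              Equiv.Perm.sign π • ExteriorAlgebra.ιMulti E n (fun i => f (g i)) := by
            rw [htuple]
            exact (ExteriorAlgebra.ιMulti E n (M := U)).map_perm (fun i => f (g i)) π
          rcases Int.units_eq_one_or (Equiv.Perm.sign π) with hs | hs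
          · refine ⟨1, Or.inl rfl, Subtype.ext ?_⟩
            rw [SetLike.val_smul, one_smul, hbwcoe, hbwcoe, hperm2, hs, one_smul]
          · refine ⟨-1, Or.inr rfl, Subtype.ext ?_⟩
            rw [SetLike.val_smul, hbwcoe, hbwcoe, hperm2, hs]
            rw [Units.smul_def, Units.val_neg, Units.val_one, neg_one_zsmul, neg_one_smul]
        have hdiagdet : Hn (bw g) (bw g) = ∏ i, a (g i) := by
          rw [hbw]
          show Hn (wedgeProd E n fun i => f (g i)) (wedgeProd E n fun i => f (g i)) = _
          rw [hHn]
          have hdg : (Matrix.of fun i j => h (f (g i)) (f (g j))) =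
              Matrix.diagonal (fun i => a (g i)) := by
            ext i j
            by_cases hij : i = j
            · subst hij; simp [ha]
            · simp only [Matrix.of_apply, Matrix.diagonal_apply_ne _ hij]
              exact hf _ _ (fun hc => hij (hginj hc))
          rw [hdg, Matrix.det_diagonal]
        rw [hεbw, map_smul, LinearMap.smul_apply, smul_eq_mul, hdiagdet, map_smul,
          smul_eq_mul]
        field_simp
      · -- k meets the complement
        push_neg at hrange
        obtain ⟨i0, hi0⟩ := hrange
        have hL : Hn (bw k) (bw g) = 0 := by
          rw [hbw]
          show Hn (wedgeProd E n fun i => f (k i)) (wedgeProd E n fun i => f (g i)) = 0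
          rw [hHn]
          apply Matrix.det_eq_zero_of_row_eq_zero i0
          intro j
          simp only [Matrix.of_apply]
          exact hf _ _ (hi0 j)
        have hcover : ∃ j0, cc j0 = k i0 := by
          by_contra hc
          push_neg at hc
          -- k i0 avoids both ranges: cardinality contradiction
          have hcard : (Finset.univ.image cc ∪ Finset.univ.image g ∪ {k i0}).card ≤
              Fintype.card (Fin (2 * n)) := Finset.card_le_univ _
          have hdisj1 : Disjoint (Finset.univ.image cc) (Finset.univ.image g) := by
            rw [Finset.disjoint_left]
            rintro x hx hx'
            obtain ⟨i, _, rfl⟩ := Finset.mem_image.mp hx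
            obtain ⟨j, _, hj⟩ := Finset.mem_image.mp hx'
            exact hdisj i j hj.symm
          have hdisj2 : Disjoint (Finset.univ.image cc ∪ Finset.univ.image g)
              ({k i0} : Finset (Fin (2 * n))) := by
            rw [Finset.disjoint_right]
            intro x hx
            rw [Finset.mem_singleton] at hx
            subst hx
            rw [Finset.mem_union]
            rintro (hmem | hmem)
            · obtain ⟨i, _, hi⟩ := Finset.mem_image.mp hmem
              exact hc i hi
            · obtain ⟨j, _, hj⟩ := Finset.mem_image.mp hmem
              exact hi0 j hj.symm
          rw [Finset.card_union_of_disjoint hdisj2, Finset.card_union_of_disjoint hdisj1,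
            Finset.card_image_of_injective _ hcinj, Finset.card_image_of_injective _ hginj,
            Finset.card_singleton] at hcard
          simp only [Finset.card_univ, Fintype.card_fin] at hcard
          omega
        obtain ⟨j0, hj0⟩ := hcover
        have hR : T1 (bw cc) (bw k) = 0 := by
          have hvz := hT1val (bw cc) (bw k)
          rw [hbwcoe, hbwcoe,
            iotaMulti_mul_eq_zero (fun i => f (cc i)) (fun i => f (k i)) j0 i0
              (show f (cc j0) = f (k i0) from congrArg f hj0), map_zero] at hvz
          exact hvz.symm
        rw [hL, hR, mul_zero]
    · -- k not injective: bw k = 0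
      rw [hbw0 k hk, map_zero, LinearMap.zero_apply, map_zero, mul_zero]
  -- star squared on a complementary pair
  have key2 : ∀ g cc : Fin n → Fin (2 * n), Function.Injective g → Function.Injective cc →
      (∀ i j, cc i ≠ g j) →
      star (star (bw g)) = ((-1 : E) ^ n * detE) • bw g := by
    intro g cc hginj hcinj hdisj
    have hdisj' : ∀ i j, g i ≠ cc j := fun i j hc => hdisj j i hc.symm
    have hA : (∏ i, a (cc i)) * (∏ i, a (g i)) = d * σ d * detE := by
      have h1 : ∏ j : Fin (2 * n), a j = (∏ i, a (cc i)) * (∏ i, a (g i)) := by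
        rw [← Function.Bijective.prod_comp (hbijapp g cc hginj hcinj hdisj) a]
        simp only [Function.comp_apply]
        rw [show (∏ x : Fin (2 * n), a (Fin.append cc g (Fin.cast h2n x))) =
            ∏ y : Fin (n + n), a (Fin.append cc g y) from
          Fin.prod_congr' (fun y => a (Fin.append cc g y)) h2n, Fin.prod_univ_add]
        congr 1
        · exact Finset.prod_congr rfl fun i _ => by rw [Fin.append_left]
        · exact Finset.prod_congr rfl fun i _ => by rw [Fin.append_right]
      rw [← h1, ← hGramf, hGramE]
    have htval := ht g cc hginj hcinj hdisj
    have ht'val := ht cc g hcinj hginj hdisj'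
    have htne : T1 (bw cc) (bw g) ≠ 0 := by
      rcases htval with h' | h' <;> rw [h'] <;> simp [hd0]
    have ht'ne : T1 (bw g) (bw cc) ≠ 0 := by
      rcases ht'val with h' | h' <;> rw [h'] <;> simp [hd0]
    have hσtt : σ (T1 (bw cc) (bw g)) * T1 (bw cc) (bw g) = σ d * d := by
      rcases htval with h' | h' <;> rw [h'] <;> simp [map_neg] <;> ring
    have hpow : (-1 : E) ^ n * (-1 : E) ^ n = 1 := by
      rw [← mul_pow]; norm_num
    have ht'eq : T1 (bw g) (bw cc) = (-1 : E) ^ n * T1 (bw cc) (bw g) := by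
      rw [hflip g cc, ← mul_assoc, hpow, one_mul]
    have hσtt' : σ (T1 (bw cc) (bw g)) * T1 (bw g) (bw cc) =
        (-1 : E) ^ n * (σ d * d) := by
      rw [ht'eq, ← hσtt]; ring
    rw [key g cc hginj hcinj hdisj, hstar_smul, key cc g hcinj hginj hdisj', smul_smul]
    congr 1
    rw [map_div₀]
    have hσprod : σ (∏ i, a (g i)) = ∏ i, a (g i) := by
      rw [map_prod]; exact Finset.prod_congr rfl fun i _ => hσa _
    rw [hσprod, div_mul_div_comm, hσtt', div_eq_iff
      (mul_ne_zero (pow_ne_zero _ (by norm_num : (-1 : E) ≠ 0))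
        (mul_ne_zero hσd0 hd0))]
    linear_combination hA - detE * σ d * d * hpow
  -- star squared on every basis wedge
  have gen : ∀ k : Fin n → Fin (2 * n),
      star (star (bw k)) = ((-1 : E) ^ n * detE) • bw k := by
    intro k
    by_cases hk : Function.Injective k
    · have hTcard : ((Finset.univ.image k)ᶜ : Finset (Fin (2 * n))).card = n := by
        rw [Finset.card_compl, Finset.card_image_of_injective _ hk]
        simp only [Finset.card_univ, Fintype.card_fin]
        omega
      set cc : Fin n → Fin (2 * n) :=
        fun i => (((Finset.univ.image k)ᶜ.orderIsoOfFin hTcard i : Fin (2 * n))) with hcc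
      have hcinj : Function.Injective cc := fun i j hij =>
        ((Finset.univ.image k)ᶜ.orderIsoOfFin hTcard).injective (Subtype.ext hij)
      have hdisj : ∀ i j, cc i ≠ k j := by
        intro i j hc
        have hmem : cc i ∈ ((Finset.univ.image k)ᶜ : Finset (Fin (2 * n))) :=
          ((Finset.univ.image k)ᶜ.orderIsoOfFin hTcard i).2
        rw [Finset.mem_compl] at hmem
        exact hmem (hc ▸ Finset.mem_image_of_mem k (Finset.mem_univ j))
      exact key2 k cc hk hcinj hdisj
    · rw [hbw0 k hk, hstar_zero, hstar_zero, smul_zero]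
  -- conclude by linearity
  intro x
  have hmem : x ∈ Submodule.span E (Set.range bw) := by rw [hspan]; exact Submodule.mem_top
  induction hmem using Submodule.span_induction with
  | mem z hz =>
    obtain ⟨k, rfl⟩ := hz
    exact gen k
  | zero => rw [hstar_zero, hstar_zero, smul_zero]
  | add y z _ _ hy hz => rw [hstar_add, hstar_add, hy, hz, smul_add]
  | smul r y _ hy =>
    rw [hstar_smul, hstar_smul, hσinv, hy, smul_comm]

end main
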